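/- arXiv:2312.13800 — 2 statements merged into one kernel-verified Lean document; each statement's English description precedes it below -/
import Mathlib

section
/- Let t ∈ ℝ be fixed, h(x) = (t² + ‖x‖²)^(−β/2), and let p: ℝ^d → ℝ be nonnegative, rotationally symmetric with r ↦ p(r·y) non-increasing in r = ‖x‖. Then for every u ∈ ℝ^d, ∫_{ℝ^d} h(x+u)·p(x) dx ≤ 2 ∫_{ℝ^d} h(x)·p(x) dx, provided the integrals exist. -/
open MeasureTheory Set ENNReal NNReal

noncomputable section

theorem integral_shift_le_two_mul {d : ℕ} (t β : ℝ) (hβ : 0 ≤ β)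
    (p : EuclideanSpace ℝ (Fin d) → ℝ)
    (hp0 : ∀ x, 0 ≤ p x)
    (hsym : ∀ x y : EuclideanSpace ℝ (Fin d), ‖x‖ = ‖y‖ → p x = p y)
    (hmono : ∀ x y : EuclideanSpace ℝ (Fin d), ‖x‖ ≤ ‖y‖ → p y ≤ p x)
    (u : EuclideanSpace ℝ (Fin d))
    (h1 : Integrable (fun x => (t^2 + ‖x + u‖^2) ^ (-β/2) * p x))
    (h2 : Integrable (fun x => (t^2 + ‖x‖^2) ^ (-β/2) * p x)) :
    ∫ x, (t^2 + ‖x + u‖^2) ^ (-β/2) * p x ≤ 2 * ∫ x, (t^2 + ‖x‖^2) ^ (-β/2) * p x := by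
  set h : EuclideanSpace ℝ (Fin d) → ℝ := fun y => (t^2 + ‖y‖^2) ^ (-β/2) with hh
  have hnn : ∀ y, 0 ≤ h y := fun y => Real.rpow_nonneg (by positivity) _
  -- key pointwise inequality
  have key : ∀ x : EuclideanSpace ℝ (Fin d), (x ≠ 0 ∨ t ≠ 0 ∨ β = 0) →
      h (x + u) * p x ≤ h x * p x + h (x + u) * p (x + u) := by
    intro x hx
    rcases le_total ‖x‖ ‖x + u‖ with hle | hle
    · have hmain : h (x + u) ≤ h x := by
        rcases eq_or_ne β 0 with hb | hb
        · simp [hh, hb]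
        · have hpos : 0 < t ^ 2 + ‖x‖ ^ 2 := by
            rcases hx with hx | hx | hx
            · have : 0 < ‖x‖ := norm_pos_iff.mpr hx
              positivity
            · positivity
            · exact absurd hx hb
          exact Real.rpow_le_rpow_of_nonpos hpos
            (by nlinarith [norm_nonneg x, norm_nonneg (x + u)])
            (by nlinarith [lt_of_le_of_ne hβ (Ne.symm hb)])
      have : h (x + u) * p x ≤ h x * p x :=
        mul_le_mul_of_nonneg_right hmain (hp0 x)
      have h2' : 0 ≤ h (x + u) * p (x + u) := mul_nonneg (hnn _) (hp0 _)
      linarith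
    · have : p x ≤ p (x + u) := hmono _ _ hle
      have : h (x + u) * p x ≤ h (x + u) * p (x + u) :=
        mul_le_mul_of_nonneg_left this (hnn _)
      have h1' : 0 ≤ h x * p x := mul_nonneg (hnn _) (hp0 _)
      linarith
  rcases Nat.eq_zero_or_pos d with hd | hd
  · -- trivial case: the space is a subsingleton
    subst hd
    haveI : Subsingleton (EuclideanSpace ℝ (Fin 0)) := by
      exact (WithLp.equiv 2 _).subsingleton
    have hxu : ∀ x : EuclideanSpace ℝ (Fin 0), x + u = x := fun x => Subsingleton.elim _ _
    have hI : 0 ≤ ∫ x, (t^2 + ‖x‖^2) ^ (-β/2) * p x :=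
      integral_nonneg fun x => mul_nonneg (hnn x) (hp0 x)
    simp only [hxu]
    linarith
  · haveI : Nonempty (Fin d) := ⟨⟨0, hd⟩⟩
    haveI : Nontrivial (EuclideanSpace ℝ (Fin d)) := by
      exact (WithLp.equiv 2 _).nontrivial
    have hshift : Integrable (fun x => h (x + u) * p (x + u)) := by
      have := h2.comp_add_right u
      simpa using this
    have hae : ∀ᵐ x : EuclideanSpace ℝ (Fin d),
        h (x + u) * p x ≤ h x * p x + h (x + u) * p (x + u) := by
      have hnull : (volume : Measure (EuclideanSpace ℝ (Fin d))) {(0 : EuclideanSpace ℝ (Fin d))} = 0 :=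
        measure_singleton 0
      filter_upwards [measure_eq_zero_iff_ae_notMem.mp hnull] with x hx
      exact key x (Or.inl hx)
    have hmono' : ∫ x, h (x + u) * p x ≤ ∫ x, (h x * p x + h (x + u) * p (x + u)) :=
      integral_mono_ae h1 (h2.add hshift) hae
    have heq : ∫ x, (h x * p x + h (x + u) * p (x + u))
        = (∫ x, h x * p x) + ∫ x, h (x + u) * p (x + u) :=
      integral_add h2 hshift
    have htrans : ∫ x, h (x + u) * p (x + u) = ∫ x, h x * p x := by
      exact integral_add_right_eq_self (fun x => h x * p x) u
    calc ∫ x, h (x + u) * p x ≤ _ := hmono'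
      _ = _ := heq
      _ = 2 * ∫ x, h x * p x := by rw [htrans]; ring
end
end

section
/- Improvement for graphs under stable drift, α ∈ (0,1]: for a Borel set T ⊆ ℝ_+ and Borel f : T → ℝ^d, with φ_α = P^α-dim G_T(f), one has φ_1 ≥ max( α·φ_α, φ_α + (1 − 1/α)·d ), where φ_1 = dim G_T(f). -/
open MeasureTheory Set ENNReal NNReal

noncomputable section

/-- An `α`-parabolic cylinder in `ℝ × ℝ^d`: a set of the form
`[t, t+c] × ∏_j [x_j, x_j + c^(1/α)]` with `c ∈ (0,1]`. -/
def IsPCyl (α : ℝ) {d : ℕ} (S : Set (ℝ × (Fin d → ℝ))) : Prop :=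
  ∃ (t : ℝ) (x : Fin d → ℝ) (c : ℝ), c ∈ Set.Ioc (0:ℝ) 1 ∧
    S = Set.Icc t (t + c) ×ˢ Set.Icc x (fun j => x j + c ^ (1/α))

/-- The `α`-parabolic `β`-Hausdorff (outer) measure: limit as `δ ↓ 0` of the infimum of
`∑ (diam P_k)^β` over countable covers by `α`-parabolic cylinders of diameter `≤ δ`. -/
def pHaus (α β : ℝ) {d : ℕ} (A : Set (ℝ × (Fin d → ℝ))) : ℝ≥0∞ :=
  ⨆ (δ : ℝ) (_ : 0 < δ),
    ⨅ (P : ℕ → Set (ℝ × (Fin d → ℝ))) (_ : A ⊆ ⋃ k, P k)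
      (_ : ∀ k, IsPCyl α (P k)) (_ : ∀ k, EMetric.diam (P k) ≤ ENNReal.ofReal δ),
      ∑' k, EMetric.diam (P k) ^ β

/-- The `α`-parabolic Hausdorff dimension. -/
def pDim (α : ℝ) {d : ℕ} (A : Set (ℝ × (Fin d → ℝ))) : ℝ≥0∞ :=
  ⨆ (β : ℝ≥0) (_ : pHaus α (β : ℝ) A = ∞), (β : ℝ≥0∞)

lemma pHaus_le {α β : ℝ} {d : ℕ} {A : Set (ℝ × (Fin d → ℝ))} {K : ℝ≥0∞}
    (h : ∀ δ : ℝ, 0 < δ → ∃ P : ℕ → Set (ℝ × (Fin d → ℝ)),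
      (A ⊆ ⋃ k, P k) ∧ (∀ k, IsPCyl α (P k)) ∧
      (∀ k, EMetric.diam (P k) ≤ ENNReal.ofReal δ) ∧
      ∑' k, EMetric.diam (P k) ^ β ≤ K) :
    pHaus α β A ≤ K := by
  refine iSup₂_le fun δ hδ => ?_
  obtain ⟨P, h1, h2, h3, h4⟩ := h δ hδ
  exact le_trans (by exact iInf₂_le_of_le P h1 (iInf₂_le_of_le h2 h3 le_rfl)) h4

lemma exists_cover {d : ℕ} {A : Set (ℝ × (Fin d → ℝ))} {s : ℝ}
    (h : μH[s] A = 0) {δ₀ : ℝ} (hδ : 0 < δ₀) :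
    ∃ t : ℕ → Set (ℝ × (Fin d → ℝ)), A ⊆ ⋃ n, t n ∧
      (∀ n, EMetric.diam (t n) ≤ ENNReal.ofReal δ₀) ∧
      ∑' n, ⨆ _ : (t n).Nonempty, EMetric.diam (t n) ^ s ≤ 1 := by
  rw [MeasureTheory.Measure.hausdorffMeasure_apply] at h
  have h2 : (⨅ (t : ℕ → Set (ℝ × (Fin d → ℝ))) (_ : A ⊆ ⋃ n, t n)
      (_ : ∀ n, EMetric.diam (t n) ≤ ENNReal.ofReal δ₀),
      ∑' n, ⨆ _ : (t n).Nonempty, EMetric.diam (t n) ^ s) = 0 := by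
    refine le_antisymm ?_ zero_le
    rw [← h]
    exact le_iSup₂ (α := ℝ≥0∞) (ENNReal.ofReal δ₀) (by simpa using hδ)
  have h3 : (⨅ (t : ℕ → Set (ℝ × (Fin d → ℝ))) (_ : A ⊆ ⋃ n, t n)
      (_ : ∀ n, EMetric.diam (t n) ≤ ENNReal.ofReal δ₀),
      ∑' n, ⨆ _ : (t n).Nonempty, EMetric.diam (t n) ^ s) < 1 := by
    rw [h2]; exact zero_lt_one
  rw [iInf_lt_iff] at h3
  obtain ⟨t, ht⟩ := h3
  rw [iInf_lt_iff] at ht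
  obtain ⟨h4, ht⟩ := ht
  rw [iInf_lt_iff] at ht
  obtain ⟨h5, ht⟩ := ht
  exact ⟨t, h4, h5, ht.le⟩
lemma cyl_diam {α : ℝ} (hα1 : 0 < α) (hα2 : α ≤ 1) {d : ℕ} (t : ℝ) (x : Fin d → ℝ)
    {c : ℝ} (hc : 0 < c) (hc1 : c ≤ 1) :
    EMetric.diam (Set.Icc t (t + c) ×ˢ Set.Icc x (fun j => x j + c ^ (1/α)))
      = ENNReal.ofReal c := by
  have hcpow : c ^ (1/α) ≤ c := by
    nth_rewrite 2 [show c = c ^ (1:ℝ) by simp]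
    exact Real.rpow_le_rpow_of_exponent_ge hc hc1 (by
      rw [le_div_iff₀ hα1, one_mul]; exact hα2)
  have hcpow0 : (0:ℝ) ≤ c ^ (1/α) := Real.rpow_nonneg hc.le _
  have hmemx : x ∈ Set.Icc x (fun j => x j + c ^ (1/α)) :=
    ⟨le_refl _, fun j => by dsimp only; linarith⟩
  apply le_antisymm
  · refine EMetric.diam_le fun p hp q hq => ?_
    rw [Set.mem_prod] at hp hq
    rw [Prod.edist_eq, max_le_iff]
    constructor
    · rw [edist_dist, Real.dist_eq]
      apply ENNReal.ofReal_le_ofReal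
      rw [abs_sub_le_iff]
      obtain ⟨h1, h2⟩ := hp.1
      obtain ⟨h3, h4⟩ := hq.1
      constructor <;> linarith
    · rw [edist_pi_def]
      refine Finset.sup_le fun j _ => ?_
      rw [edist_dist, Real.dist_eq]
      apply ENNReal.ofReal_le_ofReal
      have h1 := hp.2.1 j
      have h2 := hp.2.2 j
      have h3 := hq.2.1 j
      have h4 := hq.2.2 j
      dsimp only at h1 h2 h3 h4
      rw [abs_sub_le_iff]
      constructor <;> linarith
  · have h1 : ((t, x) : ℝ × (Fin d → ℝ)) ∈
        Set.Icc t (t + c) ×ˢ Set.Icc x (fun j => x j + c ^ (1/α)) :=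
      Set.mk_mem_prod ⟨le_refl _, by linarith⟩ hmemx
    have h2 : ((t + c, x) : ℝ × (Fin d → ℝ)) ∈
        Set.Icc t (t + c) ×ˢ Set.Icc x (fun j => x j + c ^ (1/α)) :=
      Set.mk_mem_prod ⟨by linarith, le_refl _⟩ hmemx
    refine le_trans (le_of_eq ?_) (EMetric.edist_le_diam_of_mem h1 h2)
    rw [Prod.edist_eq]
    simp [edist_dist, Real.dist_eq, abs_of_nonneg hc.le]

def tailSum (γ : ℝ) : ℝ≥0∞ := ∑' k : ℕ, ENNReal.ofReal (((1/2:ℝ)^(k+1)) ^ γ)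

lemma tailSum_ne_top {γ : ℝ} (hγ : 0 < γ) : tailSum γ ≠ ∞ := by
  have key : ∀ k : ℕ, ENNReal.ofReal (((1/2:ℝ)^(k+1)) ^ γ)
      = ENNReal.ofReal ((1/2:ℝ) ^ γ) ^ (k+1) := by
    intro k
    have e1 : ((1/2:ℝ)^(k+1))^γ = ((1/2:ℝ)^γ)^(k+1) := by
      rw [← Real.rpow_natCast (1/2:ℝ) (k+1), ← Real.rpow_natCast ((1/2:ℝ)^γ) (k+1),
        ← Real.rpow_mul (by norm_num), ← Real.rpow_mul (by norm_num), mul_comm]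
    rw [e1, ENNReal.ofReal_pow (by positivity)]
  rw [tailSum]
  simp_rw [key]
  set q : ℝ≥0∞ := ENNReal.ofReal ((1/2:ℝ) ^ γ)
  have hq1 : q < 1 := by
    rw [show (1:ℝ≥0∞) = ENNReal.ofReal 1 by simp]
    exact (ENNReal.ofReal_lt_ofReal_iff one_pos).mpr
      (Real.rpow_lt_one (by norm_num) (by norm_num) hγ)
  have : ∑' k : ℕ, q ^ (k+1) ≤ ∑' k : ℕ, q ^ k :=
    ENNReal.tsum_le_tsum fun k => pow_le_pow_of_le_one zero_le hq1.le (by omega)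
  refine ne_top_of_le_ne_top ?_ this
  rw [ENNReal.tsum_geometric]
  exact ENNReal.inv_ne_top.mpr (by simp [tsub_eq_zero_iff_le, hq1.not_ge])

lemma max_rpow_le {a b γ : ℝ} (ha : 0 ≤ a) (hb : 0 ≤ b) (hγ : 0 ≤ γ) :
    (max a b) ^ γ ≤ a ^ γ + b ^ γ := by
  rcases max_cases a b with ⟨h, _⟩ | ⟨h, _⟩ <;> rw [h]
  · have : (0:ℝ) ≤ b ^ γ := Real.rpow_nonneg hb _
    linarith
  · have : (0:ℝ) ≤ a ^ γ := Real.rpow_nonneg ha _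
    linarith

lemma main_sum {s γ : ℝ} (hs : 0 < s) (hsγ : s ≤ γ) {d : ℕ}
    (t : ℕ → Set (ℝ × (Fin d → ℝ))) {δ₀ : ℝ} (hδ₀ : 0 < δ₀) (hδ₁ : δ₀ ≤ 1)
    (hD : ∀ n, EMetric.diam (t n) ≤ ENNReal.ofReal δ₀)
    (hsum : ∑' n, ⨆ _ : (t n).Nonempty, EMetric.diam (t n) ^ s ≤ 1) :
    ∑' n, ENNReal.ofReal ((EMetric.diam (t n)).toReal ^ γ) ≤ 1 := by
  refine le_trans (ENNReal.tsum_le_tsum fun n => ?_) hsum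
  set r : ℝ := (EMetric.diam (t n)).toReal with hr
  have hDne : EMetric.diam (t n) ≠ ∞ :=
    ne_top_of_le_ne_top ENNReal.ofReal_ne_top (hD n)
  have hr0 : 0 ≤ r := ENNReal.toReal_nonneg
  rcases eq_or_lt_of_le hr0 with h0 | h0
  · rw [← h0, Real.zero_rpow (by linarith)]
    simp
  · have hne : (t n).Nonempty := by
      rw [Set.nonempty_iff_ne_empty]
      intro hemp
      have : r = 0 := by rw [hr, hemp]; simp [EMetric.diam]
      rw [this] at h0; exact lt_irrefl _ h0
    have hD' : EMetric.diam (t n) = ENNReal.ofReal r := (ENNReal.ofReal_toReal hDne).symm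
    have hrδ : r ≤ δ₀ := by
      have := ENNReal.toReal_mono ENNReal.ofReal_ne_top (hD n)
      rwa [ENNReal.toReal_ofReal hδ₀.le] at this
    have h1 : r ^ γ ≤ r ^ s :=
      Real.rpow_le_rpow_of_exponent_ge h0 (le_trans hrδ hδ₁) hsγ
    calc ENNReal.ofReal (r ^ γ) ≤ ENNReal.ofReal (r ^ s) := ENNReal.ofReal_le_ofReal h1
      _ = EMetric.diam (t n) ^ s := by
          rw [hD', ENNReal.ofReal_rpow_of_pos h0]
      _ ≤ ⨆ _ : (t n).Nonempty, EMetric.diam (t n) ^ s := le_iSup_iff.mpr fun b hb => hb hne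

-- helper: componentwise bounds from edist
lemma edist_components {d : ℕ} (p q : ℝ × (Fin d → ℝ)) {r : ℝ} (hr : 0 ≤ r)
    (h : edist p q ≤ ENNReal.ofReal r) :
    |p.1 - q.1| ≤ r ∧ ∀ j, |p.2 j - q.2 j| ≤ r := by
  rw [Prod.edist_eq, max_le_iff] at h
  constructor
  · have := h.1
    rwa [edist_dist, Real.dist_eq, ENNReal.ofReal_le_ofReal_iff hr] at this
  · intro j
    have := (edist_le_pi_edist p.2 q.2 j).trans h.2
    rwa [edist_dist, Real.dist_eq, ENNReal.ofReal_le_ofReal_iff hr] at this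

lemma rho_sum {s γ : ℝ} (hs : 0 < s) (hsγ : s ≤ γ) {d : ℕ}
    (t : ℕ → Set (ℝ × (Fin d → ℝ))) {δ₀ : ℝ} (hδ₀ : 0 < δ₀) (hδ₁ : δ₀ ≤ 1)
    (hD : ∀ n, EMetric.diam (t n) ≤ ENNReal.ofReal δ₀)
    (hsum : ∑' n, ⨆ _ : (t n).Nonempty, EMetric.diam (t n) ^ s ≤ 1) :
    ∑' n, ENNReal.ofReal
      ((max (2 * (EMetric.diam (t n)).toReal) (δ₀ * (1/2)^(n+1))) ^ γ)
      ≤ ENNReal.ofReal (2 ^ γ) + tailSum γ := by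
  have hγ : 0 < γ := lt_of_lt_of_le hs hsγ
  have key : ∀ n : ℕ, ENNReal.ofReal
      ((max (2 * (EMetric.diam (t n)).toReal) (δ₀ * (1/2)^(n+1))) ^ γ)
      ≤ ENNReal.ofReal (2 ^ γ) * ENNReal.ofReal ((EMetric.diam (t n)).toReal ^ γ)
        + ENNReal.ofReal (((1/2:ℝ)^(n+1)) ^ γ) := by
    intro n
    set r : ℝ := (EMetric.diam (t n)).toReal
    have hr0 : 0 ≤ r := ENNReal.toReal_nonneg
    have hb0 : (0:ℝ) ≤ δ₀ * (1/2)^(n+1) := by positivity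
    have h1 : (max (2*r) (δ₀ * (1/2)^(n+1))) ^ γ
        ≤ (2*r) ^ γ + (δ₀ * (1/2)^(n+1)) ^ γ :=
      max_rpow_le (by positivity) hb0 hγ.le
    have h2 : (2*r) ^ γ = 2 ^ γ * r ^ γ := Real.mul_rpow (by norm_num) hr0
    have h3 : (δ₀ * (1/2)^(n+1)) ^ γ ≤ ((1/2:ℝ)^(n+1)) ^ γ := by
      apply Real.rpow_le_rpow hb0 _ hγ.le
      nth_rewrite 2 [show ((1/2:ℝ)^(n+1)) = 1 * (1/2:ℝ)^(n+1) by ring]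
      apply mul_le_mul_of_nonneg_right hδ₁ (by positivity)
    calc ENNReal.ofReal ((max (2*r) (δ₀ * (1/2)^(n+1))) ^ γ)
        ≤ ENNReal.ofReal ((2*r) ^ γ + (δ₀ * (1/2)^(n+1)) ^ γ) :=
          ENNReal.ofReal_le_ofReal h1
      _ = ENNReal.ofReal ((2*r) ^ γ) + ENNReal.ofReal ((δ₀ * (1/2)^(n+1)) ^ γ) :=
          ENNReal.ofReal_add (by positivity) (by positivity)
      _ ≤ ENNReal.ofReal (2 ^ γ) * ENNReal.ofReal (r ^ γ)
            + ENNReal.ofReal (((1/2:ℝ)^(n+1)) ^ γ) := by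
          refine add_le_add (le_of_eq ?_) (ENNReal.ofReal_le_ofReal h3)
          rw [h2, ← ENNReal.ofReal_mul (by positivity)]
  refine le_trans (ENNReal.tsum_le_tsum key) ?_
  rw [ENNReal.tsum_add, ENNReal.tsum_mul_left]
  rw [show tailSum γ = ∑' (n:ℕ), ENNReal.ofReal (((1/2:ℝ)^(n+1)) ^ γ) from rfl]
  refine add_le_add ?_ le_rfl
  calc ENNReal.ofReal (2 ^ γ) * (∑' n, ENNReal.ofReal ((EMetric.diam (t n)).toReal ^ γ))
      ≤ ENNReal.ofReal (2 ^ γ) * 1 :=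
        mul_le_mul_right (main_sum hs hsγ t hδ₀ hδ₁ hD hsum) _
    _ = ENNReal.ofReal (2 ^ γ) := mul_one _
-- rpow facts packaged
lemma rpow_self_le {ρ α : ℝ} (hρ : 0 < ρ) (hρ1 : ρ ≤ 1) (hα1 : 0 < α) (hα2 : α ≤ 1) :
    ρ ≤ ρ ^ α := by
  nth_rewrite 1 [show ρ = ρ ^ (1:ℝ) by simp]
  exact Real.rpow_le_rpow_of_exponent_ge hρ hρ1 hα2

lemma rpow_inv_rpow' {ρ α : ℝ} (hρ : 0 ≤ ρ) (hα1 : 0 < α) : (ρ ^ α) ^ (1/α) = ρ := by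
  rw [← Real.rpow_mul hρ, mul_one_div, div_self hα1.ne', Real.rpow_one]

lemma rpow_rpow_inv' {ρ α : ℝ} (hρ : 0 ≤ ρ) (hα1 : 0 < α) : (ρ ^ (1/α)) ^ α = ρ := by
  rw [← Real.rpow_mul hρ, one_div, inv_mul_cancel₀ hα1.ne', Real.rpow_one]

open scoped Classical in
lemma some_mem_of_nonempty {d : ℕ} (t : ℕ → Set (ℝ × (Fin d → ℝ))) (n : ℕ)
    (h : (t n).Nonempty) :
    (if h' : (t n).Nonempty then h'.some else (0, fun _ => 0)) ∈ t n := by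
  rw [dif_pos h]; exact h.some_mem

lemma lemA {α : ℝ} (hα1 : 0 < α) (hα2 : α ≤ 1) {d : ℕ} (A : Set (ℝ × (Fin d → ℝ)))
    (β : ℝ≥0) (h : pHaus α (β:ℝ) A = ∞) :
    ENNReal.ofReal α * (β : ℝ≥0∞) ≤ dimH A := by
  by_contra hcon
  push_neg at hcon
  have hcoe : ENNReal.ofReal α * (β : ℝ≥0∞) = ENNReal.ofReal (α * (β:ℝ)) := by
    rw [ENNReal.ofReal_mul hα1.le, ENNReal.ofReal_coe_nnreal]
  rw [hcoe] at hcon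
  obtain ⟨s, hs1, hs2⟩ := ENNReal.lt_iff_exists_nnreal_btwn.mp hcon
  have hμ : μH[(s:ℝ)] A = 0 := hausdorffMeasure_of_dimH_lt hs1
  have hs0 : 0 < (s:ℝ) := by
    have : (0:ℝ≥0∞) < (s:ℝ≥0∞) := lt_of_le_of_lt zero_le hs1
    exact_mod_cast this
  have hγpos : 0 < α * (β:ℝ) := ENNReal.ofReal_pos.mp (lt_of_le_of_lt zero_le hs2)
  have hsγ : (s:ℝ) < α * (β:ℝ) := by
    rw [← ENNReal.ofReal_coe_nnreal, ENNReal.ofReal_lt_ofReal_iff hγpos] at hs2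
    exact hs2
  set γ : ℝ := α * (β:ℝ) with hγdef
  -- show pHaus is finite, contradiction
  have hfin : pHaus α (β:ℝ) A ≤ ENNReal.ofReal (2 ^ γ) + tailSum γ := by
    apply pHaus_le
    intro δ hδ
    set δ₀ : ℝ := (min δ 1) ^ (1/α) / 2 with hδ₀def
    have hmin0 : 0 < min δ 1 := lt_min hδ one_pos
    have hmin1 : min δ 1 ≤ 1 := min_le_right _ _
    have hpow0 : 0 < (min δ 1) ^ (1/α) := Real.rpow_pos_of_pos hmin0 _
    have hpow1 : (min δ 1) ^ (1/α) ≤ 1 :=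
      Real.rpow_le_one hmin0.le hmin1 (by positivity)
    have hδ₀ : 0 < δ₀ := by positivity
    have hδ₀1 : δ₀ ≤ 1 := by rw [hδ₀def]; linarith
    obtain ⟨t, hcov, hD, hsum⟩ := exists_cover hμ hδ₀
    -- definitions
    set r : ℕ → ℝ := fun n => (EMetric.diam (t n)).toReal with hrdef
    set ρ : ℕ → ℝ := fun n => max (2 * r n) (δ₀ * (1/2)^(n+1)) with hρdef
    set c : ℕ → ℝ := fun n => ρ n ^ α with hcdef
    classical
    set p : ℕ → ℝ × (Fin d → ℝ) :=
      fun n => if h' : (t n).Nonempty then h'.some else (0, fun _ => 0) with hpdef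
    have hr0 : ∀ n, 0 ≤ r n := fun n => ENNReal.toReal_nonneg
    have hrδ₀ : ∀ n, r n ≤ δ₀ := by
      intro n
      have := ENNReal.toReal_mono ENNReal.ofReal_ne_top (hD n)
      rwa [ENNReal.toReal_ofReal hδ₀.le] at this
    have hρpos : ∀ n, 0 < ρ n := fun n => lt_max_of_lt_right (by positivity)
    have hρup : ∀ n, ρ n ≤ 2 * δ₀ := by
      intro n
      apply max_le (by have := hrδ₀ n; linarith)
      have h1 : ((1:ℝ)/2)^(n+1) ≤ 1 := by
        apply pow_le_one₀ (by norm_num) (by norm_num)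
      nlinarith [hδ₀.le]
    have hρ1 : ∀ n, ρ n ≤ 1 := by
      intro n
      refine le_trans (hρup n) ?_
      rw [hδ₀def]; linarith
    have hc0 : ∀ n, 0 < c n := fun n => Real.rpow_pos_of_pos (hρpos n) _
    have hc1 : ∀ n, c n ≤ 1 := fun n =>
      Real.rpow_le_one (hρpos n).le (hρ1 n) hα1.le
    have hρc : ∀ n, ρ n ≤ c n := fun n => rpow_self_le (hρpos n) (hρ1 n) hα1 hα2
    have hcδ : ∀ n, c n ≤ min δ 1 := by
      intro n
      have h1 : c n ≤ (2*δ₀) ^ α := Real.rpow_le_rpow (hρpos n).le (hρup n) hα1.le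
      have h2 : (2*δ₀ : ℝ) = (min δ 1) ^ (1/α) := by rw [hδ₀def]; ring
      rw [h2] at h1
      rwa [rpow_rpow_inv' hmin0.le hα1] at h1
    have hcρ : ∀ n, c n ^ (1/α) = ρ n := fun n => rpow_inv_rpow' (hρpos n).le hα1
    -- the cylinders
    refine ⟨fun n => Set.Icc ((p n).1 - r n) (((p n).1 - r n) + c n) ×ˢ
      Set.Icc (fun j => (p n).2 j - r n) (fun j => ((p n).2 j - r n) + c n ^ (1/α)),
      ?_, ?_, ?_, ?_⟩
    · -- covering
      refine hcov.trans (Set.iUnion_mono fun n => ?_)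
      intro q hq
      have hne : (t n).Nonempty := ⟨q, hq⟩
      have hp : p n ∈ t n := some_mem_of_nonempty t n hne
      have hed : edist q (p n) ≤ ENNReal.ofReal (r n) := by
        rw [hrdef]
        have hDne : EMetric.diam (t n) ≠ ∞ :=
          ne_top_of_le_ne_top ENNReal.ofReal_ne_top (hD n)
        rw [ENNReal.ofReal_toReal hDne]
        exact EMetric.edist_le_diam_of_mem hq hp
      obtain ⟨h1, h2⟩ := edist_components q (p n) (hr0 n) hed
      rw [abs_sub_le_iff] at h1
      have h2r : 2 * r n ≤ c n := le_trans (le_max_left _ _) (hρc n)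
      constructor
      · constructor
        · linarith [h1.2]
        · linarith [h1.1]
      · constructor
        · intro j
          have := h2 j
          rw [abs_sub_le_iff] at this
          dsimp only; linarith [this.2]
        · intro j
          have := h2 j
          rw [abs_sub_le_iff] at this
          have h2r' : 2 * r n ≤ c n ^ (1/α) := by
            rw [hcρ n]; exact le_max_left _ _
          dsimp only; linarith [this.1]
    · -- is cylinder
      intro n
      exact ⟨(p n).1 - r n, fun j => (p n).2 j - r n, c n, ⟨hc0 n, hc1 n⟩, rfl⟩
    · -- diameter bound
      intro n
      rw [cyl_diam hα1 hα2 _ _ (hc0 n) (hc1 n)]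
      exact ENNReal.ofReal_le_ofReal (le_trans (hcδ n) (min_le_left _ _))
    · -- sum bound
      have heq : ∀ n, EMetric.diam
          (Set.Icc ((p n).1 - r n) (((p n).1 - r n) + c n) ×ˢ
            Set.Icc (fun j => (p n).2 j - r n)
              (fun j => ((p n).2 j - r n) + c n ^ (1/α))) ^ (β:ℝ)
          = ENNReal.ofReal (ρ n ^ γ) := by
        intro n
        rw [cyl_diam hα1 hα2 _ _ (hc0 n) (hc1 n),
          ENNReal.ofReal_rpow_of_pos (hc0 n), hcdef]
        dsimp only
        rw [← Real.rpow_mul (hρpos n).le]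
      rw [tsum_congr heq]
      exact rho_sum hs0 hsγ.le t hδ₀ hδ₀1 hD hsum
  rw [h] at hfin
  exact (ENNReal.add_ne_top.mpr ⟨ENNReal.ofReal_ne_top, tailSum_ne_top hγpos⟩)
    (top_le_iff.mp hfin)
set_option maxHeartbeats 2000000 in
open scoped Classical in
lemma lemB {α : ℝ} (hα1 : 0 < α) (hα2 : α ≤ 1) {d : ℕ} (A : Set (ℝ × (Fin d → ℝ)))
    (β : ℝ≥0) (h : pHaus α (β:ℝ) A = ∞) :
    (β : ℝ≥0∞) ≤ dimH A + ENNReal.ofReal (1/α - 1) * d := by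
  by_contra hcon
  push_neg at hcon
  set c' : ℝ := (1/α - 1) * d with hc'def
  have hα' : (1:ℝ) ≤ 1/α := by rw [le_div_iff₀ hα1, one_mul]; exact hα2
  have hc'0 : 0 ≤ c' := by
    apply mul_nonneg (by linarith) (Nat.cast_nonneg d)
  have hCeq : ENNReal.ofReal (1/α - 1) * (d : ℝ≥0∞) = ENNReal.ofReal c' := by
    rw [hc'def, ENNReal.ofReal_mul (by linarith), ENNReal.ofReal_natCast]
  rw [hCeq] at hcon
  -- c' < β
  have hc'β : c' < (β:ℝ) := by
    have h1 : ENNReal.ofReal c' < (β : ℝ≥0∞) :=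
      lt_of_le_of_lt (le_add_self) hcon
    rw [← ENNReal.ofReal_coe_nnreal] at h1
    by_contra hle
    push_neg at hle
    exact absurd (ENNReal.ofReal_le_ofReal hle) (not_le.mpr h1)
  set γ : ℝ := (β:ℝ) - c' with hγdef
  have hγ0 : 0 < γ := by rw [hγdef]; linarith
  have hdim : dimH A < ENNReal.ofReal γ := by
    have hsplit : ((β:ℝ≥0∞)) = ENNReal.ofReal γ + ENNReal.ofReal c' := by
      rw [← ENNReal.ofReal_add (by linarith) hc'0, ← ENNReal.ofReal_coe_nnreal]
      congr 1
      rw [hγdef]; ring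
    rw [hsplit] at hcon
    exact (ENNReal.add_lt_add_iff_right ENNReal.ofReal_ne_top).mp hcon
  obtain ⟨s, hs1, hs2⟩ := ENNReal.lt_iff_exists_nnreal_btwn.mp hdim
  have hμ : μH[(s:ℝ)] A = 0 := hausdorffMeasure_of_dimH_lt hs1
  have hs0 : 0 < (s:ℝ) := by
    have : (0:ℝ≥0∞) < (s:ℝ≥0∞) := lt_of_le_of_lt zero_le hs1
    exact_mod_cast this
  have hsγ : (s:ℝ) < γ := by
    rw [← ENNReal.ofReal_coe_nnreal, ENNReal.ofReal_lt_ofReal_iff hγ0] at hs2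
    exact hs2
  have hβ0 : 0 < (β:ℝ) := lt_of_le_of_lt hc'0 hc'β
  -- index equivalence
  haveI : Denumerable (ℕ × (Fin d → ℕ)) := Denumerable.ofEncodableOfInfinite _
  set e : (ℕ × (Fin d → ℕ)) ≃ ℕ := Denumerable.eqv _ with hedef
  set K : ℝ≥0∞ := ENNReal.ofReal (2^(d:ℝ)) * (ENNReal.ofReal (2 ^ γ) + tailSum γ)
      + tailSum (β:ℝ) with hKdef
  have hKne : K ≠ ∞ := by
    rw [hKdef]
    refine ENNReal.add_ne_top.mpr ⟨ENNReal.mul_ne_top ENNReal.ofReal_ne_top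
      (ENNReal.add_ne_top.mpr ⟨ENNReal.ofReal_ne_top, tailSum_ne_top hγ0⟩),
      tailSum_ne_top hβ0⟩
  have hfin : pHaus α (β:ℝ) A ≤ K := by
    apply pHaus_le
    intro δ hδ
    set δ₀ : ℝ := min δ 1 / 4 with hδ₀def
    have hmin0 : 0 < min δ 1 := lt_min hδ one_pos
    have hmin1 : min δ 1 ≤ 1 := min_le_right _ _
    have hδ₀ : 0 < δ₀ := by positivity
    have hδ₀1 : δ₀ ≤ 1 := by rw [hδ₀def]; linarith
    obtain ⟨t, hcov, hD, hsum⟩ := exists_cover hμ hδ₀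
    set r : ℕ → ℝ := fun n => (EMetric.diam (t n)).toReal with hrdef
    set ρ : ℕ → ℝ := fun n => max (2 * r n) (δ₀ * (1/2)^(n+1)) with hρdef
    set p : ℕ → ℝ × (Fin d → ℝ) :=
      fun n => if h' : (t n).Nonempty then h'.some else (0, fun _ => 0) with hpdef
    have hr0 : ∀ n, 0 ≤ r n := fun n => ENNReal.toReal_nonneg
    have hrδ₀ : ∀ n, r n ≤ δ₀ := by
      intro n
      have := ENNReal.toReal_mono ENNReal.ofReal_ne_top (hD n)
      rwa [ENNReal.toReal_ofReal hδ₀.le] at this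
    have hρpos : ∀ n, 0 < ρ n := fun n => lt_max_of_lt_right (by positivity)
    have hρup : ∀ n, ρ n ≤ 2 * δ₀ := by
      intro n
      apply max_le (by have := hrδ₀ n; linarith)
      have h1 : ((1:ℝ)/2)^(n+1) ≤ 1 := pow_le_one₀ (by norm_num) (by norm_num)
      nlinarith [hδ₀.le]
    have hρ1 : ∀ n, ρ n ≤ 1 := fun n => le_trans (hρup n) (by rw [hδ₀def]; linarith)
    have hρδ : ∀ n, ρ n ≤ δ := fun n => le_trans (hρup n)
      (by rw [hδ₀def]; have := min_le_left δ 1; linarith)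
    -- space side length
    have hsρ0 : ∀ n, 0 < ρ n ^ (1/α) := fun n => Real.rpow_pos_of_pos (hρpos n) _
    -- number of grid cubes per axis
    set M : ℕ → ℕ := fun n => ⌈ρ n ^ (1 - 1/α)⌉₊ with hMdef
    have hx1 : ∀ n, 1 ≤ ρ n ^ (1 - 1/α) := fun n =>
      Real.one_le_rpow_of_pos_of_le_one_of_nonpos (hρpos n) (hρ1 n) (by linarith)
    have hM1 : ∀ n, 1 ≤ M n := fun n =>
      Nat.ceil_pos.mpr (lt_of_lt_of_le one_pos (hx1 n))
    have hMs : ∀ n, ρ n ≤ (M n : ℝ) * ρ n ^ (1/α) := by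
      intro n
      have h1 : ρ n ^ (1 - 1/α) ≤ (M n : ℝ) := Nat.le_ceil _
      have h2 : ρ n ^ (1 - 1/α) * ρ n ^ (1/α) = ρ n := by
        rw [← Real.rpow_add (hρpos n)]; norm_num
      calc ρ n = ρ n ^ (1 - 1/α) * ρ n ^ (1/α) := h2.symm
        _ ≤ (M n : ℝ) * ρ n ^ (1/α) :=
          mul_le_mul_of_nonneg_right h1 (hsρ0 n).le
    have hMle : ∀ n, (M n : ℝ) ≤ 2 * ρ n ^ (1 - 1/α) := by
      intro n
      have h1 : (M n : ℝ) < ρ n ^ (1 - 1/α) + 1 :=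
        Nat.ceil_lt_add_one (by positivity)
      have := hx1 n
      linarith
    -- the cylinder families
    set T : ℕ → ℝ := fun n => (p n).1 - r n with hTdef
    set X : ℕ → (Fin d → ℕ) → (Fin d → ℝ) :=
      fun n v j => ((p n).2 j - r n) + (v j : ℝ) * ρ n ^ (1/α) with hXdef
    set Cyl : ℕ → (Fin d → ℕ) → Set (ℝ × (Fin d → ℝ)) :=
      fun n v => Set.Icc (T n) (T n + ρ n) ×ˢ
        Set.Icc (X n v) (fun j => X n v j + ρ n ^ (1/α)) with hCyldef
    set junk : ℕ → Set (ℝ × (Fin d → ℝ)) :=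
      fun k => Set.Icc (0:ℝ) (0 + δ₀ * (1/2)^(k+1)) ×ˢ
        Set.Icc (0 : Fin d → ℝ) (fun j => (0:Fin d → ℝ) j + (δ₀ * (1/2)^(k+1)) ^ (1/α))
      with hjunkdef
    set P : ℕ → Set (ℝ × (Fin d → ℝ)) :=
      fun k => if (∀ j, (e.symm k).2 j < M (e.symm k).1)
        then Cyl (e.symm k).1 (e.symm k).2 else junk k with hPdef
    have hjk0 : ∀ k : ℕ, (0:ℝ) < δ₀ * (1/2)^(k+1) := fun k => by positivity
    have hjk1 : ∀ k : ℕ, δ₀ * (1/2)^(k+1) ≤ 1 := by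
      intro k
      have h1 : ((1:ℝ)/2)^(k+1) ≤ 1 := pow_le_one₀ (by norm_num) (by norm_num)
      nlinarith [hδ₀.le]
    refine ⟨P, ?_, ?_, ?_, ?_⟩
    · -- covering
      intro q hq
      obtain ⟨n, hn⟩ := Set.mem_iUnion.mp (hcov hq)
      have hne : (t n).Nonempty := ⟨q, hn⟩
      have hp : p n ∈ t n := some_mem_of_nonempty t n hne
      have hed : edist q (p n) ≤ ENNReal.ofReal (r n) := by
        have hDne : EMetric.diam (t n) ≠ ∞ :=
          ne_top_of_le_ne_top ENNReal.ofReal_ne_top (hD n)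
        rw [hrdef]
        rw [ENNReal.ofReal_toReal hDne]
        exact EMetric.edist_le_diam_of_mem hn hp
      obtain ⟨h1, h2⟩ := edist_components q (p n) (hr0 n) hed
      rw [abs_sub_le_iff] at h1
      have h2r : 2 * r n ≤ ρ n := le_max_left _ _
      -- choose grid index
      set y : Fin d → ℝ := fun j => q.2 j - ((p n).2 j - r n) with hydef
      have hy0 : ∀ j, 0 ≤ y j := by
        intro j
        have := h2 j; rw [abs_sub_le_iff] at this
        simp only [hydef]; linarith [this.1]
      have hy2r : ∀ j, y j ≤ 2 * r n := by
        intro j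
        have := h2 j; rw [abs_sub_le_iff] at this
        simp only [hydef]; linarith [this.2]
      set v : Fin d → ℕ := fun j => min (⌊y j / ρ n ^ (1/α)⌋₊) (M n - 1) with hvdef
      have hvM : ∀ j, v j < M n := by
        intro j
        have hm1 := hM1 n
        have hv' : v j ≤ M n - 1 := min_le_right _ _
        omega
      have hlow : ∀ j, (v j : ℝ) * ρ n ^ (1/α) ≤ y j := by
        intro j
        rcases le_or_gt (⌊y j / ρ n ^ (1/α)⌋₊) (M n - 1) with hc | hc
        · have hveq : v j = ⌊y j / ρ n ^ (1/α)⌋₊ := min_eq_left hc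
          rw [hveq]
          have := Nat.floor_le (div_nonneg (hy0 j) (hsρ0 n).le)
          rw [le_div_iff₀ (hsρ0 n)] at this
          exact this
        · have hveq : v j = M n - 1 := min_eq_right hc.le
          rw [hveq]
          have hfl : (M n : ℝ) ≤ y j / ρ n ^ (1/α) := by
            have h3 : (M n : ℝ) ≤ (⌊y j / ρ n ^ (1/α)⌋₊ : ℝ) := by
              exact_mod_cast Nat.le_of_lt_succ (by omega)
            exact le_trans h3 (Nat.floor_le (div_nonneg (hy0 j) (hsρ0 n).le))
          rw [le_div_iff₀ (hsρ0 n)] at hfl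
          have hcast : ((M n - 1 : ℕ) : ℝ) = (M n : ℝ) - 1 := by
            have := hM1 n
            push_cast [Nat.cast_sub this]
            ring
          rw [hcast]
          nlinarith [hsρ0 n]
      have hhigh : ∀ j, y j ≤ (v j : ℝ) * ρ n ^ (1/α) + ρ n ^ (1/α) := by
        intro j
        rcases le_or_gt (⌊y j / ρ n ^ (1/α)⌋₊) (M n - 1) with hc | hc
        · have hveq : v j = ⌊y j / ρ n ^ (1/α)⌋₊ := min_eq_left hc
          rw [hveq]
          have := Nat.lt_floor_add_one (y j / ρ n ^ (1/α))
          rw [div_lt_iff₀ (hsρ0 n)] at this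
          nlinarith
        · have hveq : v j = M n - 1 := min_eq_right hc.le
          rw [hveq]
          have hcast : ((M n - 1 : ℕ) : ℝ) = (M n : ℝ) - 1 := by
            have := hM1 n
            push_cast [Nat.cast_sub this]
            ring
          rw [hcast]
          have hA := hMs n
          have hB := hy2r j
          have hexp : ((M n:ℝ) - 1) * ρ n ^ (1/α) + ρ n ^ (1/α)
              = (M n:ℝ) * ρ n ^ (1/α) := by ring
          rw [hexp]
          exact le_trans (hy2r j) (le_trans h2r hA)
      -- membership
      rw [Set.mem_iUnion]
      refine ⟨e (n, v), ?_⟩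
      have hsymm : e.symm (e (n, v)) = (n, v) := Equiv.symm_apply_apply e _
      simp only [hPdef, hsymm]
      rw [if_pos hvM]
      simp only [hCyldef]
      constructor
      · constructor
        · simp only [hTdef]; linarith [h1.2]
        · simp only [hTdef]; linarith [h1.1, h2r]
      · constructor
        · intro j
          simp only [hXdef]
          have := hlow j
          simp only [hydef] at this
          linarith
        · intro j
          simp only [hXdef]
          have := hhigh j
          simp only [hydef] at this
          linarith
    · -- is cylinder
      intro k
      simp only [hPdef]
      by_cases hcond : (∀ j, (e.symm k).2 j < M (e.symm k).1)
      · rw [if_pos hcond]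
        simp only [hCyldef]
        exact ⟨T (e.symm k).1, X (e.symm k).1 (e.symm k).2, ρ (e.symm k).1,
          ⟨hρpos _, hρ1 _⟩, rfl⟩
      · rw [if_neg hcond]
        simp only [hjunkdef]
        exact ⟨0, 0, δ₀ * (1/2)^(k+1), ⟨hjk0 k, hjk1 k⟩, rfl⟩
    · -- diameter ≤ δ
      intro k
      simp only [hPdef]
      by_cases hcond : (∀ j, (e.symm k).2 j < M (e.symm k).1)
      · rw [if_pos hcond]
        simp only [hCyldef]
        rw [cyl_diam hα1 hα2 _ _ (hρpos _) (hρ1 _)]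
        exact ENNReal.ofReal_le_ofReal (hρδ _)
      · rw [if_neg hcond]
        simp only [hjunkdef]
        rw [cyl_diam hα1 hα2 _ _ (hjk0 k) (hjk1 k)]
        apply ENNReal.ofReal_le_ofReal
        have h1 : ((1:ℝ)/2)^(k+1) ≤ 1 := pow_le_one₀ (by norm_num) (by norm_num)
        have h2 := min_le_left δ 1
        have h3 : δ₀ * (1/2)^(k+1) ≤ δ₀ := by nlinarith [hδ₀.le]
        have h4 : δ₀ ≤ δ := by rw [hδ₀def]; linarith
        linarith
    · -- sum bound
      set g : ℕ → ℝ≥0∞ := fun k =>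
        if (∀ j, (e.symm k).2 j < M (e.symm k).1)
          then ENNReal.ofReal (ρ (e.symm k).1 ^ (β:ℝ)) else 0 with hgdef
      have hterm : ∀ k, EMetric.diam (P k) ^ (β:ℝ)
          ≤ g k + ENNReal.ofReal (((1/2:ℝ)^(k+1)) ^ (β:ℝ)) := by
        intro k
        simp only [hPdef, hgdef]
        by_cases hcond : (∀ j, (e.symm k).2 j < M (e.symm k).1)
        · rw [if_pos hcond, if_pos hcond]
          simp only [hCyldef]
          rw [cyl_diam hα1 hα2 _ _ (hρpos _) (hρ1 _),
            ENNReal.ofReal_rpow_of_pos (hρpos _)]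
          exact le_self_add
        · rw [if_neg hcond, if_neg hcond]
          simp only [hjunkdef]
          rw [cyl_diam hα1 hα2 _ _ (hjk0 k) (hjk1 k),
            ENNReal.ofReal_rpow_of_pos (hjk0 k), zero_add]
          apply ENNReal.ofReal_le_ofReal
          apply Real.rpow_le_rpow (hjk0 k).le _ hβ0.le
          nth_rewrite 2 [show ((1/2:ℝ)^(k+1)) = 1 * (1/2:ℝ)^(k+1) by ring]
          exact mul_le_mul_of_nonneg_right hδ₀1 (by positivity)
      refine le_trans (ENNReal.tsum_le_tsum hterm) ?_
      rw [ENNReal.tsum_add, hKdef]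
      refine add_le_add ?_ le_rfl
      have hre : ∑' k, g k = ∑' (i : ℕ × (Fin d → ℕ)), g (e i) := (e.tsum_eq g).symm
      rw [hre, ENNReal.tsum_prod']
      have hinner : ∀ n : ℕ, ∑' (v : Fin d → ℕ), g (e (n, v))
          = (((M n)^d : ℕ) : ℝ≥0∞) * ENNReal.ofReal (ρ n ^ (β:ℝ)) := by
        intro n
        have hsimp : ∀ v : Fin d → ℕ, g (e (n, v))
            = if (∀ j, v j < M n) then ENNReal.ofReal (ρ n ^ (β:ℝ)) else 0 := by
          intro v
          simp only [hgdef, Equiv.symm_apply_apply]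
        rw [tsum_congr hsimp]
        rw [tsum_eq_sum (s := Fintype.piFinset fun _ : Fin d => Finset.range (M n))
          (fun v hv => if_neg (fun hall => hv (Fintype.mem_piFinset.mpr
            (fun j => Finset.mem_range.mpr (hall j)))))]
        have hval : ∀ v ∈ Fintype.piFinset (fun _ : Fin d => Finset.range (M n)),
            (if (∀ j, v j < M n) then ENNReal.ofReal (ρ n ^ (β:ℝ)) else 0)
            = ENNReal.ofReal (ρ n ^ (β:ℝ)) := by
          intro v hv
          exact if_pos (fun j => Finset.mem_range.mp (Fintype.mem_piFinset.mp hv j))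
        rw [Finset.sum_congr rfl hval, Finset.sum_const, nsmul_eq_mul]
        congr 1
        have hcard : (Fintype.piFinset fun _ : Fin d => Finset.range (M n)).card
            = (M n)^d := by
          simp [Fintype.card_piFinset, Finset.card_range]
        exact_mod_cast congrArg (Nat.cast (R := ℝ≥0∞)) hcard
      have hbound : ∀ n : ℕ, (((M n)^d : ℕ) : ℝ≥0∞) * ENNReal.ofReal (ρ n ^ (β:ℝ))
          ≤ ENNReal.ofReal (2^(d:ℝ)) * ENNReal.ofReal (ρ n ^ γ) := by
        intro n
        have hcast : (((M n)^d : ℕ) : ℝ≥0∞) = ENNReal.ofReal ((M n : ℝ)^d) := by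
          rw [← ENNReal.ofReal_natCast]
          congr 1
          push_cast
          ring
        rw [hcast, ← ENNReal.ofReal_mul (by positivity), ← ENNReal.ofReal_mul (by positivity)]
        apply ENNReal.ofReal_le_ofReal
        have h1 : (M n : ℝ)^d ≤ (2 * ρ n ^ (1 - 1/α))^d :=
          pow_le_pow_left₀ (Nat.cast_nonneg _) (hMle n) d
        have h2 : (2 * ρ n ^ (1 - 1/α))^d = 2^(d:ℝ) * ρ n ^ ((1 - 1/α) * d) := by
          rw [mul_pow, Real.rpow_natCast 2 d, ← Real.rpow_natCast (ρ n ^ (1 - 1/α)) d,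
            ← Real.rpow_mul (hρpos n).le]
        have h3 : ρ n ^ ((1 - 1/α) * d) * ρ n ^ (β:ℝ) = ρ n ^ γ := by
          rw [← Real.rpow_add (hρpos n)]
          congr 1
          rw [hγdef, hc'def]; ring
        calc (M n : ℝ)^d * ρ n ^ (β:ℝ) ≤ (2 * ρ n ^ (1 - 1/α))^d * ρ n ^ (β:ℝ) :=
              mul_le_mul_of_nonneg_right h1 (by positivity)
          _ = 2^(d:ℝ) * (ρ n ^ ((1 - 1/α)*d) * ρ n ^ (β:ℝ)) := by rw [h2]; ring
          _ = 2^(d:ℝ) * ρ n ^ γ := by rw [h3]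
      refine le_trans (ENNReal.tsum_le_tsum
        (fun n => le_trans (le_of_eq (hinner n)) (hbound n))) ?_
      rw [ENNReal.tsum_mul_left]
      refine mul_le_mul_right ?_ _
      have hrho := rho_sum hs0 hsγ.le t hδ₀ hδ₀1 hD hsum
      simp only [hρdef, hrdef]
      exact hrho
  rw [h] at hfin
  exact hKne (top_le_iff.mp hfin)
theorem graph_dim_improvement {d : ℕ} (T : Set ℝ) (hT : MeasurableSet T)
    (hT0 : T ⊆ Set.Ici 0) (f : ℝ → Fin d → ℝ) (hf : Measurable f)
    (α : ℝ) (hα1 : 0 < α) (hα2 : α ≤ 1) :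
    ENNReal.ofReal α * pDim α {p : ℝ × (Fin d → ℝ) | p.1 ∈ T ∧ p.2 = f p.1} ≤
      dimH {p : ℝ × (Fin d → ℝ) | p.1 ∈ T ∧ p.2 = f p.1} ∧
    pDim α {p : ℝ × (Fin d → ℝ) | p.1 ∈ T ∧ p.2 = f p.1} ≤
      dimH {p : ℝ × (Fin d → ℝ) | p.1 ∈ T ∧ p.2 = f p.1} +
        ENNReal.ofReal (1/α - 1) * d := by
  set G := {p : ℝ × (Fin d → ℝ) | p.1 ∈ T ∧ p.2 = f p.1} with hGdef
  constructor
  · have hrw : pDim α G = ⨆ (β : ℝ≥0) (_ : pHaus α (β:ℝ) G = ∞), (β:ℝ≥0∞) := rfl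
    rw [hrw, ENNReal.mul_iSup]
    refine iSup_le fun β => ?_
    rw [ENNReal.mul_iSup]
    exact iSup_le fun hβ => lemA hα1 hα2 _ β hβ
  · exact iSup₂_le fun β hβ => lemB hα1 hα2 _ β hβ
end
end
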